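/- Let S ∈ ℝ^{n×n}, P symmetric positive definite, μ_2 ≤ μ_m positive reals, ζ ∈ ℝ with |1 - 2μ_j/(μ_2+μ_m)| ≤ ζ for a given μ_j ∈ [μ_2, μ_m], and suppose P - SᵀPS + (1-ζ²)·(SᵀP𝟏𝟏ᵀPS)/(𝟏ᵀP𝟏) is positive definite. With Γ = (2/(μ_2+μ_m))·(𝟏ᵀPS)/(𝟏ᵀP𝟏), the matrix (S - μ_j·𝟏·Γ)ᵀP(S - μ_j·𝟏·Γ) - P is negative definite, and hence ρ(S - μ_j·𝟏·Γ) < 1. -/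

import Mathlib

open Matrix
variable {n : ℕ}

lemma vmv_mulVec (a b x : Fin n → ℝ) :
    (vecMulVec a b) *ᵥ x = (b ⬝ᵥ x) • a := by
  ext i
  simp [vecMulVec_apply, mulVec, dotProduct, Finset.mul_sum, mul_assoc, mul_comm, mul_left_comm]

lemma mul_vmv (M : Matrix (Fin n) (Fin n) ℝ) (a b : Fin n → ℝ) :
    M * vecMulVec a b = vecMulVec (M *ᵥ a) b := by
  ext i j
  simp [vecMulVec_apply, mul_apply, mulVec, dotProduct, Finset.sum_mul, mul_assoc]

lemma vmv_mul (a b : Fin n → ℝ) (M : Matrix (Fin n) (Fin n) ℝ) :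
    vecMulVec a b * M = vecMulVec a (b ᵥ* M) := by
  ext i j
  simp [vecMulVec_apply, mul_apply, vecMul, dotProduct, Finset.mul_sum, mul_assoc]

lemma vmv_transpose (a b : Fin n → ℝ) : (vecMulVec a b)ᵀ = vecMulVec b a := by
  ext i j; simp [vecMulVec_apply, mul_comm]

lemma re_quad (M : Matrix (Fin n) (Fin n) ℝ) (z : Fin n → ℂ) :
    (star z ⬝ᵥ (M.map Complex.ofReal) *ᵥ z).re
      = (fun i => (z i).re) ⬝ᵥ M *ᵥ (fun i => (z i).re)
        + (fun i => (z i).im) ⬝ᵥ M *ᵥ (fun i => (z i).im) := by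
  simp only [dotProduct, mulVec, map_apply, Pi.star_apply, Finset.mul_sum]
  rw [Complex.re_sum, ← Finset.sum_add_distrib]
  refine Finset.sum_congr rfl fun i _ => ?_
  rw [Complex.re_sum, ← Finset.sum_add_distrib]
  refine Finset.sum_congr rfl fun j _ => ?_
  simp only [RCLike.star_def, Complex.mul_re, Complex.mul_im, Complex.conj_re,
    Complex.conj_im, Complex.ofReal_re, Complex.ofReal_im]
  ring

lemma smul_vmv (c : ℝ) (a b : Fin n → ℝ) :
    vecMulVec (c • a) b = c • vecMulVec a b := by
  ext i j; simp [vecMulVec_apply, mul_assoc]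

lemma vmv_smul (c : ℝ) (a b : Fin n → ℝ) :
    vecMulVec a (c • b) = c • vecMulVec a b := by
  ext i j; simp [vecMulVec_apply]; ring

lemma quad_identity (S P : Matrix (Fin n) (Fin n) ℝ) (ones v : Fin n → ℝ)
    (hv : (Sᵀ * P) *ᵥ ones = v) (hw : ones ᵥ* (P * S) = v) (t β : ℝ)
    (hβ : (ones ᵥ* P) ⬝ᵥ ones = β) :
    (S - t • vecMulVec ones v)ᵀ * P * (S - t • vecMulVec ones v)
      = Sᵀ * P * S + (t ^ 2 * β - 2 * t) • vecMulVec v v := by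
  have h1 : Sᵀ * P * (t • vecMulVec ones v) = t • vecMulVec v v := by
    rw [mul_smul_comm, mul_vmv, hv]
  have h2 : (t • vecMulVec v ones) * P * S = t • vecMulVec v v := by
    rw [smul_mul_assoc, smul_mul_assoc, vmv_mul, vmv_mul, vecMul_vecMul, hw]
  have h3 : (t • vecMulVec v ones) * P * (t • vecMulVec ones v)
      = (t ^ 2 * β) • vecMulVec v v := by
    rw [smul_mul_assoc, smul_mul_assoc, mul_smul_comm, vmv_mul, mul_vmv,
      vmv_mulVec, hβ, smul_vmv, smul_smul, smul_smul]
    ring_nf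
  rw [transpose_sub, transpose_smul, vmv_transpose, sub_mul, sub_mul, mul_sub, mul_sub,
    h1, h2, h3]
  module

lemma map_mulVec_star (A : Matrix (Fin n) (Fin n) ℝ) (z : Fin n → ℂ) :
    (A.map Complex.ofReal) *ᵥ (star z) = star ((A.map Complex.ofReal) *ᵥ z) := by
  ext i
  simp [mulVec, dotProduct, map_apply, star_sum, Complex.conj_ofReal]

lemma map_sub_mul (A B C : Matrix (Fin n) (Fin n) ℝ) :
    (A * B * C - B).map Complex.ofReal
      = (A.map Complex.ofReal) * (B.map Complex.ofReal) * (C.map Complex.ofReal)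
        - B.map Complex.ofReal := by
  ext i j
  simp only [map_apply, Matrix.sub_apply, mul_apply]
  push_cast
  ring

theorem riccati_stabilization {n : ℕ}
    (S P : Matrix (Fin n) (Fin n) ℝ) (hP : P.PosDef)
    (μ₂ μₘ μj : ℝ) (hμ₂ : 0 < μ₂) (hle : μ₂ ≤ μₘ)
    (hμl : μ₂ ≤ μj) (hμu : μj ≤ μₘ)
    (ones : Fin n → ℝ) (hones : ones = fun _ => 1)
    (ζ : ℝ) (hζ : |1 - 2 * μj / (μ₂ + μₘ)| ≤ ζ)
    (hRiccati : (P - Sᵀ * P * S +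
      ((1 - ζ ^ 2) / (ones ⬝ᵥ P.mulVec ones)) •
        vecMulVec ((Sᵀ * P).mulVec ones) (ones ᵥ* (P * S))).PosDef)
    (Γ : Fin n → ℝ)
    (hΓ : Γ = (2 / (μ₂ + μₘ) / (ones ⬝ᵥ P.mulVec ones)) • (ones ᵥ* (P * S))) :
    (∀ x : Fin n → ℝ, x ≠ 0 →
      x ⬝ᵥ ((S - μj • vecMulVec ones Γ)ᵀ * P * (S - μj • vecMulVec ones Γ)
        - P).mulVec x < 0) ∧
    (∀ μ ∈ spectrum ℂ ((S - μj • vecMulVec ones Γ).map Complex.ofReal),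
      ‖μ‖ < 1) := by
  have hσ : 0 < μ₂ + μₘ := by linarith
  have hPt : Pᵀ = P := by
    ext i j
    simpa [Matrix.conjTranspose_apply] using (congrFun (congrFun hP.1 j) i).symm
  set β := ones ⬝ᵥ P *ᵥ ones with hβ
  set v := (Sᵀ * P) *ᵥ ones with hv
  have hw : ones ᵥ* (P * S) = v := by
    rw [hv, show Sᵀ * P = (P * S)ᵀ by rw [transpose_mul, hPt]]
    exact (mulVec_transpose (P * S) ones).symm
  rw [hw] at hRiccati
  have hA : μj • vecMulVec ones Γ = (μj * (2 / (μ₂ + μₘ) / β)) • vecMulVec ones v := by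
    rw [hΓ, hw, vmv_smul, smul_smul]
  set t := μj * (2 / (μ₂ + μₘ) / β) with ht
  set A := S - μj • vecMulVec ones Γ with hAdef
  have part1 : ∀ x : Fin n → ℝ, x ≠ 0 → x ⬝ᵥ (Aᵀ * P * A - P) *ᵥ x < 0 := by
    intro x hx
    have hne : Nonempty (Fin n) := by
      by_contra h
      exact hx (funext fun i => absurd ⟨i⟩ h)
    obtain ⟨i0⟩ := hne
    have hones0 : ones ≠ 0 := by
      rw [hones]; intro h
      simpa using congrFun h i0
    have hβpos : 0 < β := by
      have h := hP.dotProduct_mulVec_pos hones0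
      rw [star_trivial] at h
      exact h
    have hβ0 : β ≠ 0 := ne_of_gt hβpos
    have hid : Aᵀ * P * A = Sᵀ * P * S + (t ^ 2 * β - 2 * t) • vecMulVec v v := by
      rw [hAdef, hA]
      exact quad_identity S P ones v hv.symm hw t β (by rw [← dotProduct_mulVec, ← hβ])
    have hk : t ^ 2 * β - 2 * t + (1 - ζ ^ 2) / β ≤ 0 := by
      have h1 : (1 - 2 * μj / (μ₂ + μₘ)) ^ 2 ≤ ζ ^ 2 := by
        calc (1 - 2 * μj / (μ₂ + μₘ)) ^ 2
            = |1 - 2 * μj / (μ₂ + μₘ)| ^ 2 := (sq_abs _).symm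
          _ ≤ ζ ^ 2 := pow_le_pow_left₀ (abs_nonneg _) hζ 2
      have h2 : t ^ 2 * β - 2 * t + (1 - ζ ^ 2) / β
          = ((1 - 2 * μj / (μ₂ + μₘ)) ^ 2 - ζ ^ 2) / β := by
        rw [ht]; field_simp; ring
      rw [h2]
      exact div_nonpos_of_nonpos_of_nonneg (by linarith) hβpos.le
    have hq : x ⬝ᵥ (Aᵀ * P * A - P) *ᵥ x
        = -(x ⬝ᵥ (P - Sᵀ * P * S + ((1 - ζ ^ 2) / β) • vecMulVec v v) *ᵥ x)
          + (t ^ 2 * β - 2 * t + (1 - ζ ^ 2) / β) * (v ⬝ᵥ x) ^ 2 := by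
      rw [hid]
      have hsplit : Sᵀ * P * S + (t ^ 2 * β - 2 * t) • vecMulVec v v - P
          = -(P - Sᵀ * P * S + ((1 - ζ ^ 2) / β) • vecMulVec v v)
            + (t ^ 2 * β - 2 * t + (1 - ζ ^ 2) / β) • vecMulVec v v := by
        module
      rw [hsplit, add_mulVec, neg_mulVec, smul_mulVec, vmv_mulVec,
        dotProduct_add, dotProduct_neg, dotProduct_smul, dotProduct_smul,
        smul_eq_mul, smul_eq_mul, dotProduct_comm x v]
      ring
    have hpos := hRiccati.dotProduct_mulVec_pos hx
    rw [star_trivial] at hpos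
    rw [hq]
    have := mul_nonpos_of_nonpos_of_nonneg hk (sq_nonneg (v ⬝ᵥ x))
    linarith
  refine ⟨part1, ?_⟩
  intro μ hμ
  rw [spectrum.mem_iff] at hμ
  have hdet : (algebraMap ℂ (Matrix (Fin n) (Fin n) ℂ) μ - A.map Complex.ofReal).det = 0 := by
    by_contra h
    exact hμ ((Matrix.isUnit_iff_isUnit_det _).mpr (Ne.isUnit h))
  obtain ⟨z, hz0, hzeq⟩ := (Matrix.exists_mulVec_eq_zero_iff).mpr hdet
  have heig : (A.map Complex.ofReal) *ᵥ z = μ • z := by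
    rw [Algebra.algebraMap_eq_smul_one, sub_mulVec, smul_mulVec, one_mulVec,
      sub_eq_zero] at hzeq
    exact hzeq.symm
  set x : Fin n → ℝ := fun i => (z i).re with hxdef
  set y : Fin n → ℝ := fun i => (z i).im with hydef
  have hxy : x ≠ 0 ∨ y ≠ 0 := by
    by_contra h
    push_neg at h
    apply hz0
    funext i
    exact Complex.ext (by simpa [hxdef] using congrFun h.1 i)
      (by simpa [hydef] using congrFun h.2 i)
  have hPq : 0 < (star z ⬝ᵥ (P.map Complex.ofReal) *ᵥ z).re := by
    rw [re_quad]
    have hnn : ∀ w : Fin n → ℝ, 0 ≤ w ⬝ᵥ P *ᵥ w := fun w => by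
      rcases eq_or_ne w 0 with rfl | hw
      · simp
      · have h := hP.dotProduct_mulVec_pos hw
        rw [star_trivial] at h
        exact h.le
    rcases hxy with hx | hy
    · have h1 := hP.dotProduct_mulVec_pos hx
      rw [star_trivial] at h1
      have h2 := hnn y
      linarith
    · have h1 := hP.dotProduct_mulVec_pos hy
      rw [star_trivial] at h1
      have h2 := hnn x
      linarith
  have hMq : (star z ⬝ᵥ ((Aᵀ * P * A - P).map Complex.ofReal) *ᵥ z).re < 0 := by
    rw [re_quad]
    have hle' : ∀ w : Fin n → ℝ, w ⬝ᵥ (Aᵀ * P * A - P) *ᵥ w ≤ 0 := fun w => by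
      rcases eq_or_ne w 0 with rfl | hw
      · simp
      · exact (part1 w hw).le
    rcases hxy with hx | hy
    · have h1 := part1 x hx; have h2 := hle' y; linarith
    · have h1 := part1 y hy; have h2 := hle' x; linarith
  have hcalc : star z ⬝ᵥ ((Aᵀ.map Complex.ofReal) * (P.map Complex.ofReal)
        * (A.map Complex.ofReal)) *ᵥ z
      = ((‖μ‖ ^ 2 : ℝ) : ℂ) * (star z ⬝ᵥ (P.map Complex.ofReal) *ᵥ z) := by
    rw [← mulVec_mulVec, ← mulVec_mulVec, heig, dotProduct_mulVec,
      Matrix.transpose_map, vecMul_transpose, map_mulVec_star, heig, star_smul,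
      mulVec_smul, smul_dotProduct, dotProduct_smul, smul_eq_mul, smul_eq_mul,
      ← mul_assoc]
    congr 1
    rw [RCLike.star_def, mul_comm, Complex.mul_conj, Complex.normSq_eq_norm_sq]
  have hfinal : (star z ⬝ᵥ ((Aᵀ * P * A - P).map Complex.ofReal) *ᵥ z).re
      = (‖μ‖ ^ 2 - 1) * (star z ⬝ᵥ (P.map Complex.ofReal) *ᵥ z).re := by
    rw [map_sub_mul, sub_mulVec, dotProduct_sub, hcalc, Complex.sub_re,
      Complex.mul_re, Complex.ofReal_re, Complex.ofReal_im]
    ring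
  rw [hfinal] at hMq
  have hsq : ‖μ‖ ^ 2 < 1 := by nlinarith
  nlinarith [norm_nonneg μ]
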